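/- Bounded asymptotic error for slowly time-varying plants: let (g_n)_{n≥1} be a sequence of functions g_n : ℝ → ℝ, each differentiable and convex on ℝ, and suppose there are constants 0 < c ≤ C with c ≤ g_n'(u) ≤ C for all u ∈ ℝ and all n. Fix r ∈ ℝ and u₀ ∈ ℝ, and define e_n = r − g_n(u_{n−1}) and u_n = u_{n−1} + e_n / g_n'(u_{n−1}) for n ≥ 1. Then for every ε > 0 there exists δ > 0 such that: if |g_{n+1}(u_n) − g_n(u_n)| < δ for all n ≥ 1, then limsup_{n→∞} |e_n| < ε. -/

import Mathlib

open Filter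

/-- Supporting line inequality for a differentiable convex function. -/
lemma support_line_aux {f : ℝ → ℝ} (hconv : ConvexOn ℝ Set.univ f)
    (hf : Differentiable ℝ f) (x y : ℝ) :
    f x + deriv f x * (y - x) ≤ f y := by
  rcases lt_trichotomy x y with h | h | h
  · have h1 := hconv.deriv_le_slope (Set.mem_univ x) (Set.mem_univ y) h (hf x)
    rw [slope_def_field] at h1
    have h2 : deriv f x * (y - x) ≤ f y - f x := (le_div_iff₀ (by linarith)).mp h1
    linarith
  · subst h; simp
  · have h1 := hconv.slope_le_deriv (Set.mem_univ y) (Set.mem_univ x) h (hf x)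
    rw [slope_def_field] at h1
    have h2 : f x - f y ≤ deriv f x * (x - y) := (div_le_iff₀ (by linarith)).mp h1
    have h3 : deriv f x * (y - x) = -(deriv f x * (x - y)) := by ring
    linarith

/-- Two-sided Lipschitz bounds from derivative bounds. -/
lemma lipschitz_bounds_aux {f : ℝ → ℝ} (hf : Differentiable ℝ f) {c C : ℝ}
    (hb : ∀ x, c ≤ deriv f x ∧ deriv f x ≤ C) {x y : ℝ} (hxy : x ≤ y) :
    c * (y - x) ≤ f y - f x ∧ f y - f x ≤ C * (y - x) := by
  have m1 : Monotone (fun t => f t - c * t) := by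
    apply monotone_of_deriv_nonneg (by fun_prop)
    intro z
    have h : HasDerivAt (fun t : ℝ => f t - c * t) (deriv f z - c) z :=
      (hf z).hasDerivAt.sub (by simpa using (hasDerivAt_id z).const_mul c)
    rw [h.deriv]; linarith [(hb z).1]
  have m2 : Monotone (fun t => C * t - f t) := by
    apply monotone_of_deriv_nonneg (by fun_prop)
    intro z
    have h : HasDerivAt (fun t : ℝ => C * t - f t) (C - deriv f z) z :=
      HasDerivAt.sub (by simpa using (hasDerivAt_id z).const_mul C) (hf z).hasDerivAt
    rw [h.deriv]; linarith [(hb z).2]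
  have h1 := m1 hxy
  have h2 := m2 hxy
  simp only at h1 h2
  constructor <;> nlinarith

theorem time_varying_controller_bounded_asymptotic_error
    (g : ℕ → ℝ → ℝ)
    (hg : ∀ n : ℕ, 1 ≤ n → Differentiable ℝ (g n))
    (hconv : ∀ n : ℕ, 1 ≤ n → ConvexOn ℝ Set.univ (g n))
    (c C : ℝ) (hc : 0 < c) (hcC : c ≤ C)
    (hbound : ∀ n : ℕ, 1 ≤ n → ∀ x : ℝ, c ≤ deriv (g n) x ∧ deriv (g n) x ≤ C)
    (r : ℝ) (u e : ℕ → ℝ)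
    (he : ∀ n : ℕ, e (n + 1) = r - g (n + 1) (u n))
    (hu : ∀ n : ℕ, u (n + 1) = u n + e (n + 1) / deriv (g (n + 1)) (u n)) :
    ∀ ε > (0 : ℝ), ∃ δ > (0 : ℝ),
      (∀ n : ℕ, 1 ≤ n → |g (n + 1) (u n) - g n (u n)| < δ) →
        Filter.limsup (fun n => ((|e n| : ℝ) : EReal)) atTop < (ε : EReal) := by
  intro ε hε
  have hC : (0 : ℝ) < C := lt_of_lt_of_le hc hcC
  set q : ℝ := 1 - c / C with hq
  have h1q : 1 - q = c / C := by rw [hq]; ring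
  have hq0 : 0 ≤ q := by
    rw [hq]
    have : c / C ≤ 1 := div_le_one_of_le₀ hcC hC.le
    linarith
  have hq1 : q < 1 := by
    rw [hq]
    have : 0 < c / C := div_pos hc hC
    linarith
  set K : ℝ := C / c + 1 with hKdef
  have hK1 : (1 : ℝ) ≤ K := by
    rw [hKdef]
    have : (1:ℝ) ≤ C / c := (one_le_div hc).mpr hcC
    linarith
  have hK : (0 : ℝ) < K := by linarith
  set δ : ℝ := (1 - q) * ε / (4 * K) with hδdef
  have hδ : 0 < δ := by
    rw [hδdef, h1q]
    positivity
  have hKδ : K * δ = (1 - q) * ε / 4 := by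
    rw [hδdef]; field_simp
  clear_value q K δ
  refine ⟨δ, hδ, ?_⟩
  intro H
  -- basic facts about each plant
  have hone : ∀ n : ℕ, 1 ≤ n + 1 := fun n => Nat.succ_le_succ (Nat.zero_le n)
  -- S1 : after a step, the same-plant error is ≤ 0 (overshoot, by convexity)
  have hS1 : ∀ n : ℕ, r ≤ g (n + 1) (u (n + 1)) := by
    intro n
    have hd := hbound (n + 1) (hone n) (u n)
    have hd0 : 0 < deriv (g (n + 1)) (u n) := lt_of_lt_of_le hc hd.1
    have hsl := support_line_aux (hconv (n + 1) (hone n)) (hg (n + 1) (hone n)) (u n) (u (n + 1))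
    have hdiff : u (n + 1) - u n = e (n + 1) / deriv (g (n + 1)) (u n) := by
      rw [hu n]; ring
    rw [hdiff, mul_div_cancel₀ _ hd0.ne'] at hsl
    have := he n
    linarith
  -- S2 : the actual error differs from the same-plant error by less than δ
  have hS2 : ∀ n : ℕ, |e (n + 2) - (r - g (n + 1) (u (n + 1)))| < δ := by
    intro n
    have hH := H (n + 1) (hone n)
    have hdiffeq : e (n + 2) - (r - g (n + 1) (u (n + 1)))
        = -(g (n + 1 + 1) (u (n + 1)) - g (n + 1) (u (n + 1))) := by
      rw [he (n + 1)]; ring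
    rw [hdiffeq, abs_neg]
    exact hH
  have hsmall : ∀ n : ℕ, e (n + 2) ≤ δ := by
    intro n
    have h2 := hS2 n
    rw [abs_lt] at h2
    have h1 := hS1 n
    linarith [h2.2]
  -- contraction step
  have hstep : ∀ n : ℕ, e (n + 1) ≤ δ → |e (n + 2)| ≤ q * |e (n + 1)| + K * δ := by
    intro n hEδ
    have hd := hbound (n + 1) (hone n) (u n)
    set d := deriv (g (n + 1)) (u n) with hddef
    clear_value d
    have hd0 : 0 < d := lt_of_lt_of_le hc hd.1
    have hdiff : u (n + 1) - u n = e (n + 1) / d := by rw [hu n, ← hddef]; ring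
    have h1 := hS1 n
    have h2 := hS2 n
    rw [abs_lt] at h2
    obtain ⟨h2a, h2b⟩ := h2
    have hen := he n
    have hqabs : 0 ≤ q * |e (n + 1)| := mul_nonneg hq0 (abs_nonneg _)
    rcases le_or_gt (e (n + 1)) 0 with hneg | hpos
    · -- e ≤ 0 : contraction with factor q
      have hle : u (n + 1) ≤ u n := by
        have : e (n + 1) / d ≤ 0 := div_nonpos_iff.mpr (Or.inr ⟨hneg, hd0.le⟩)
        linarith [hdiff]
      have hlip := (lipschitz_bounds_aux (hg (n + 1) (hone n))
        (hbound (n + 1) (hone n)) hle).1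
      -- g(u n) - g(u (n+1)) ≥ c * (u n - u (n+1)) = c * (-(e/d))
      have hud : u n - u (n + 1) = -(e (n + 1) / d) := by linarith [hdiff]
      have hdivle : e (n + 1) / d ≤ e (n + 1) / C := by
        rw [div_le_div_iff₀ hd0 hC]
        exact mul_le_mul_of_nonpos_left hd.2 hneg
      -- g(u(n+1)) - g(u n) ≤ c * (e/d) ≤ c * (e/C)
      have hub : g (n + 1) (u (n + 1)) - g (n + 1) (u n) ≤ c * (e (n + 1) / C) := by
        have h3 : c * (u n - u (n + 1)) = -(c * (e (n + 1) / d)) := by rw [hud]; ring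
        have h4 : c * (e (n + 1) / d) ≤ c * (e (n + 1) / C) :=
          mul_le_mul_of_nonneg_left hdivle hc.le
        linarith
      have hqe : q * e (n + 1) = e (n + 1) - c * (e (n + 1) / C) := by
        rw [hq]; field_simp
      -- q * e(n+1) ≤ r - g(n+1)(u(n+1)) ≤ 0
      have hEh : q * e (n + 1) ≤ r - g (n + 1) (u (n + 1)) := by
        rw [hqe]; linarith
      have habs : |e (n + 1)| = -(e (n + 1)) := abs_of_nonpos hneg
      have hq2 : 0 ≤ q * (-(e (n + 1))) := mul_nonneg hq0 (by linarith)
      have hq3 : q * (-(e (n + 1))) = -(q * e (n + 1)) := by ring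
      have hKδδ : δ ≤ K * δ := le_mul_of_one_le_left hδ.le hK1
      rw [abs_le, habs]
      constructor
      · linarith
      · linarith
    · -- 0 < e ≤ δ : error jumps to at most K δ in magnitude
      have hge : u n ≤ u (n + 1) := by
        have : 0 ≤ e (n + 1) / d := div_nonneg hpos.le hd0.le
        linarith [hdiff]
      have hlip := (lipschitz_bounds_aux (hg (n + 1) (hone n))
        (hbound (n + 1) (hone n)) hge).2
      have hdivle : e (n + 1) / d ≤ e (n + 1) / c := by
        rw [div_le_div_iff₀ hd0 hc]
        exact mul_le_mul_of_nonneg_left hd.1 hpos.le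
      have hub : g (n + 1) (u (n + 1)) - g (n + 1) (u n) ≤ C * (e (n + 1) / c) := by
        have h3 : C * (u (n + 1) - u n) = C * (e (n + 1) / d) := by rw [hdiff]
        have h4 : C * (e (n + 1) / d) ≤ C * (e (n + 1) / c) :=
          mul_le_mul_of_nonneg_left hdivle hC.le
        linarith
      have hCc : C * (e (n + 1) / c) = (C / c) * e (n + 1) := by ring
      have hEh : -((C / c) * δ) ≤ r - g (n + 1) (u (n + 1)) := by
        have h5 : (C / c) * e (n + 1) ≤ (C / c) * δ :=
          mul_le_mul_of_nonneg_left hEδ (by positivity)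
        rw [hCc] at hub
        linarith
      have hKδ' : (C / c) * δ + δ = K * δ := by rw [hKdef]; ring
      have hKδδ : δ ≤ K * δ := le_mul_of_one_le_left hδ.le hK1
      rw [abs_le]
      constructor
      · linarith
      · linarith
  -- induction : geometric decay to level ε/4
  have hind : ∀ k : ℕ, |e (k + 2)| ≤ q ^ k * |e 2| + ε / 4 := by
    intro k
    induction k with
    | zero => simp; positivity
    | succ k ih =>
      have h1 := hstep (k + 1) (hsmall k)
      have eidx : k + 1 + 1 = k + 2 := by omega
      rw [eidx] at h1
      have h2 : q * |e (k + 2)| ≤ q * (q ^ k * |e 2| + ε / 4) :=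
        mul_le_mul_of_nonneg_left ih hq0
      have h3 : q * (q ^ k * |e 2|) = q ^ (k + 1) * |e 2| := by rw [pow_succ]; ring
      rw [mul_add, h3] at h2
      have : |e (k + 1 + 2)| ≤ q ^ (k + 1) * |e 2| + q * (ε / 4) + K * δ := by linarith
      rw [hKδ] at this
      have heq : (k + 1) + 2 = k + 3 := rfl
      calc |e (k + 1 + 2)| ≤ q ^ (k + 1) * |e 2| + q * (ε / 4) + (1 - q) * ε / 4 := this
        _ = q ^ (k + 1) * |e 2| + ε / 4 := by ring
  -- find N with q^N * |e 2| < ε/4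
  have htend : Tendsto (fun n : ℕ => q ^ n * |e 2|) atTop (nhds 0) := by
    simpa using (tendsto_pow_atTop_nhds_zero_of_lt_one hq0 hq1).mul_const (|e 2|)
  have hev : ∀ᶠ n : ℕ in atTop, q ^ n * |e 2| < ε / 4 :=
    htend.eventually (gt_mem_nhds (by linarith))
  obtain ⟨N, hN⟩ := eventually_atTop.mp hev
  -- eventual bound by ε/2
  have hfin : ∀ᶠ m : ℕ in atTop, ((|e m| : ℝ) : EReal) ≤ ((ε / 2 : ℝ) : EReal) := by
    rw [eventually_atTop]
    refine ⟨N + 2, fun m hm => ?_⟩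
    obtain ⟨t, rfl⟩ := Nat.exists_eq_add_of_le hm
    have hidx : N + 2 + t = (N + t) + 2 := by omega
    rw [hidx]
    have h1 := hind (N + t)
    have h2 : q ^ (N + t) ≤ q ^ N := pow_le_pow_of_le_one hq0 hq1.le (Nat.le_add_right N t)
    have h3 : q ^ (N + t) * |e 2| ≤ q ^ N * |e 2| :=
      mul_le_mul_of_nonneg_right h2 (abs_nonneg _)
    have h4 := hN N le_rfl
    have : |e ((N + t) + 2)| ≤ ε / 2 := by linarith
    exact_mod_cast this
  have hle : Filter.limsup (fun n => ((|e n| : ℝ) : EReal)) atTop ≤ ((ε / 2 : ℝ) : EReal) :=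
    limsup_le_of_le (by isBoundedDefault) hfin
  refine lt_of_le_of_lt hle ?_
  exact_mod_cast (by linarith : ε / 2 < ε)
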